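/- Let a_1, …, a_n ∈ ℝ^d and y_1, …, y_n ∈ {−1, 1}, and suppose the data are linearly separable: there exist v ∈ ℝ^d and γ > 0 with y_i·⟨a_i, v⟩ ≥ γ for all i. Let f(x) = (1/n)·Σ_{i=1}^n log(1 + exp(−y_i·⟨a_i, x⟩)). Then inf f = 0 and for every x ∈ ℝ^d with ∇f(x) ≠ 0: ⟨∇f(x), ∇²f(x)∇f(x)⟩ / ‖∇f(x)‖² ≤ (2/(3√3))·((1/n)·Σ_{i=1}^n ‖a_i‖⁴)^{1/2}·√(f(x)). -/

import Mathlib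

open scoped RealInnerProductSpace


noncomputable section

lemma key_ineq (t : ℝ) :
    Real.exp t / (1 + Real.exp t)^2
      ≤ (2 / (3 * Real.sqrt 3)) * Real.sqrt (Real.log (1 + Real.exp t)) := by
  have hE := Real.exp_pos t
  set E := Real.exp t with hEdef
  have h1 : (0:ℝ) < 1 + E := by linarith
  set p : ℝ := E / (1 + E) with hp
  have hp0 : 0 < p := by positivity
  have hp1 : p < 1 := by rw [hp, div_lt_one h1]; linarith
  -- log(1+E) ≥ p
  have hlog : p ≤ Real.log (1 + E) := by
    have : Real.log (1/(1+E)) ≤ 1/(1+E) - 1 := Real.log_le_sub_one_of_pos (by positivity)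
    have h2 : Real.log (1/(1+E)) = - Real.log (1+E) := by
      rw [one_div, Real.log_inv]
    rw [h2] at this
    have : Real.log (1+E) ≥ 1 - 1/(1+E) := by linarith
    have h3 : 1 - 1/(1+E) = p := by rw [hp]; field_simp; ring
    linarith [h3 ▸ this]
  have hs3 : Real.sqrt 3 > 0 := Real.sqrt_pos.2 (by norm_num)
  have hs3sq : Real.sqrt 3 ^ 2 = 3 := Real.sq_sqrt (by norm_num)
  have hsp : Real.sqrt p ≤ Real.sqrt (Real.log (1+E)) := Real.sqrt_le_sqrt hlog
  have hspsq : Real.sqrt p ^ 2 = p := Real.sq_sqrt hp0.le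
  have hsp0 : 0 < Real.sqrt p := Real.sqrt_pos.2 hp0
  have hlhs : Real.exp t / (1 + E)^2 = p * (1 - p) := by
    rw [hp, ← hEdef]; field_simp; ring
  rw [hlhs]
  have hkey : p * (1 - p) ≤ (2 / (3 * Real.sqrt 3)) * Real.sqrt p := by
    have hple : p ≤ Real.sqrt p := by
      nlinarith [hspsq, hsp0, hp1]
    have h4 : Real.sqrt p * (1 - Real.sqrt p ^2) ≤ 2 / (3 * Real.sqrt 3) := by
      rw [le_div_iff₀ (by positivity)]
      have hid : Real.sqrt p * (1 - Real.sqrt p ^ 2) * (3 * Real.sqrt 3)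
          = 2 - (Real.sqrt p * Real.sqrt 3 - 1)^2 * (Real.sqrt p * Real.sqrt 3 + 2) := by
        linear_combination (Real.sqrt p ^ 3 * Real.sqrt 3) * hs3sq
      nlinarith [mul_nonneg (sq_nonneg (Real.sqrt p * Real.sqrt 3 - 1))
          (by positivity : (0:ℝ) ≤ Real.sqrt p * Real.sqrt 3 + 2), hid]
    nlinarith [hple, hp1, hsp0.le]
  calc p * (1-p) ≤ (2 / (3 * Real.sqrt 3)) * Real.sqrt p := hkey
    _ ≤ (2 / (3 * Real.sqrt 3)) * Real.sqrt (Real.log (1+E)) := by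
        apply mul_le_mul_of_nonneg_left hsp (by positivity)

variable {d n : ℕ}

abbrev E (d : ℕ) := EuclideanSpace ℝ (Fin d)

lemma hasDerivAt_logistic (t : ℝ) :
    HasDerivAt (fun t => Real.log (1 + Real.exp t)) (Real.exp t / (1 + Real.exp t)) t := by
  have h : HasDerivAt (fun t => 1 + Real.exp t) (Real.exp t) t := (Real.hasDerivAt_exp t).const_add 1
  simpa using h.log (by positivity)

lemma hasDerivAt_sigma (t : ℝ) :
    HasDerivAt (fun t => Real.exp t / (1 + Real.exp t)) (Real.exp t / (1 + Real.exp t)^2) t := by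
  have h1 := Real.hasDerivAt_exp t
  have h2 : HasDerivAt (fun t => 1 + Real.exp t) (Real.exp t) t := h1.const_add 1
  have h3 := h1.div h2 (by positivity)
  refine h3.congr_deriv ?_
  have := Real.exp_pos t
  ring

-- gradient computation
lemma hasGradientAt_f (a : Fin n → E d) (y : Fin n → ℝ)
    (f : E d → ℝ)
    (hf : ∀ x, f x = (1/(n:ℝ)) * ∑ i, Real.log (1 + Real.exp (-(y i * ⟪a i, x⟫)))) (x : E d) :
    HasGradientAt f
      (∑ i, ((1/(n:ℝ)) * (-(y i) * (Real.exp (-(y i * ⟪a i, x⟫)) / (1 + Real.exp (-(y i * ⟪a i, x⟫)))))) • a i) x := by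
  rw [hasGradientAt_iff_hasFDerivAt]
  have hfe : f = fun x => ∑ i, (1/(n:ℝ)) * Real.log (1 + Real.exp (-(y i * ⟪a i, x⟫))) := by
    funext x; rw [hf x, Finset.mul_sum]
  rw [hfe]
  have hD : HasFDerivAt (fun x : E d => ∑ i, (1/(n:ℝ)) * Real.log (1 + Real.exp (-(y i * ⟪a i, x⟫))))
      (∑ i, ((1/(n:ℝ)) * (-(y i) * (Real.exp (-(y i * ⟪a i, x⟫)) / (1 + Real.exp (-(y i * ⟪a i, x⟫)))))) •
        (innerSL ℝ (a i))) x := by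
    apply HasFDerivAt.fun_sum
    intro i _
    have hinner : HasFDerivAt (fun x : E d => ⟪a i, x⟫) (innerSL ℝ (a i)) x :=
      (innerSL ℝ (a i)).hasFDerivAt
    have hu : HasFDerivAt (fun x : E d => -(y i * ⟪a i, x⟫)) ((-(y i)) • innerSL ℝ (a i)) x := by
      have := (hinner.const_mul (y i)).neg
      refine this.congr_fderiv ?_
      ext u; simp
    have hcomp := (hasDerivAt_logistic (-(y i * ⟪a i, x⟫))).comp_hasFDerivAt x hu
    have := hcomp.const_mul (1/(n:ℝ))
    refine this.congr_fderiv ?_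
    ext u; simp; ring
  refine hD.congr_fderiv ?_
  ext u
  simp [inner_sum, real_inner_smul_left]

lemma hasFDerivAt_G (a : Fin n → E d) (y : Fin n → ℝ) (x : E d) :
    HasFDerivAt (fun x : E d => ∑ i,
        ((1/(n:ℝ)) * (-(y i) * (Real.exp (-(y i * ⟪a i, x⟫)) / (1 + Real.exp (-(y i * ⟪a i, x⟫)))))) • a i)
      (∑ i, ((1/(n:ℝ)) * (y i * y i *
          (Real.exp (-(y i * ⟪a i, x⟫)) / (1 + Real.exp (-(y i * ⟪a i, x⟫)))^2))) •
        ((innerSL ℝ (a i)).smulRight (a i))) x := by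
  apply HasFDerivAt.fun_sum
  intro i _
  have hinner : HasFDerivAt (fun x : E d => ⟪a i, x⟫) (innerSL ℝ (a i)) x :=
    (innerSL ℝ (a i)).hasFDerivAt
  have hu : HasFDerivAt (fun x : E d => -(y i * ⟪a i, x⟫)) ((-(y i)) • innerSL ℝ (a i)) x := by
    have := (hinner.const_mul (y i)).neg
    refine this.congr_fderiv ?_
    ext u; simp
  have hcomp := (hasDerivAt_sigma (-(y i * ⟪a i, x⟫))).comp_hasFDerivAt x hu
  have h2 := (hcomp.const_mul (-(y i))).const_mul (1/(n:ℝ))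
  have h3 := h2.smul_const (a i)
  refine h3.congr_fderiv ?_
  refine ContinuousLinearMap.ext fun u => ?_
  simp only [ContinuousLinearMap.smulRight_apply, ContinuousLinearMap.smul_apply,
    ContinuousLinearMap.coe_smul', Pi.smul_apply, coe_innerSL_apply, innerSL_apply_apply,
    Function.comp_apply, smul_eq_mul, smul_smul, ContinuousLinearMap.neg_apply]
  congr 1
  ring

lemma chain_ineq (a : Fin n → E d) (h l : Fin n → ℝ) (c : ℝ) (hc : 0 ≤ c)
    (hh0 : ∀ i, 0 ≤ h i) (hl0 : ∀ i, 0 ≤ l i)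
    (hkey : ∀ i, h i ≤ c * Real.sqrt (l i)) :
    (1/(n:ℝ)) * ∑ i, h i * ‖a i‖^2
      ≤ c * ((1/(n:ℝ)) * ∑ i, ‖a i‖^4) ^ ((1:ℝ)/2) * Real.sqrt ((1/(n:ℝ)) * ∑ i, l i) := by
  set A := ∑ i, ‖a i‖^4 with hA
  set L := ∑ i, l i with hL
  have hA0 : 0 ≤ A := Finset.sum_nonneg fun i _ => by positivity
  have hL0 : 0 ≤ L := Finset.sum_nonneg fun i _ => hl0 i
  have h1 : (∑ i, h i * ‖a i‖^2)^2 ≤ A * (c^2 * L) := by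
    have hcs := Finset.sum_mul_sq_le_sq_mul_sq Finset.univ (fun i => ‖a i‖^2) h
    have h2 : ∀ i ∈ Finset.univ, (h i)^2 ≤ c^2 * l i := by
      intro i _
      nlinarith [hkey i, Real.sq_sqrt (hl0 i), Real.sqrt_nonneg (l i), hh0 i]
    have h3 : ∑ i, (h i)^2 ≤ c^2 * L := by
      rw [hL, Finset.mul_sum]; exact Finset.sum_le_sum (fun i hi => h2 i hi)
    have h4 : ∑ i, (‖a i‖^2)^2 = A := by rw [hA]; congr 1; funext i; ring
    calc (∑ i, h i * ‖a i‖^2)^2 = (∑ i, ‖a i‖^2 * h i)^2 := by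
            congr 1; exact Finset.sum_congr rfl fun i _ => by ring
      _ ≤ (∑ i, (‖a i‖^2)^2) * (∑ i, (h i)^2) := hcs
      _ ≤ A * (c^2 * L) := by
          rw [h4]
          exact mul_le_mul_of_nonneg_left h3 hA0
  have hsum0 : 0 ≤ ∑ i, h i * ‖a i‖^2 :=
    Finset.sum_nonneg fun i _ => mul_nonneg (hh0 i) (by positivity)
  have h5 : ∑ i, h i * ‖a i‖^2 ≤ Real.sqrt A * c * Real.sqrt L := by
    have := Real.sqrt_le_sqrt h1
    rw [Real.sqrt_sq hsum0] at this
    calc ∑ i, h i * ‖a i‖^2 ≤ Real.sqrt (A * (c^2 * L)) := this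
      _ = Real.sqrt A * c * Real.sqrt L := by
          rw [Real.sqrt_mul hA0, Real.sqrt_mul (by positivity), Real.sqrt_sq hc]; ring
  have e1 : ((1/(n:ℝ)) * A) ^ ((1:ℝ)/2) = Real.sqrt (1/(n:ℝ)) * Real.sqrt A := by
    rw [← Real.sqrt_eq_rpow, Real.sqrt_mul (by positivity)]
  have e2 : Real.sqrt ((1/(n:ℝ)) * L) = Real.sqrt (1/(n:ℝ)) * Real.sqrt L :=
    Real.sqrt_mul (by positivity) _
  have e3 : Real.sqrt (1/(n:ℝ)) * Real.sqrt (1/(n:ℝ)) = 1/(n:ℝ) :=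
    Real.mul_self_sqrt (by positivity)
  rw [e1, e2]
  calc (1/(n:ℝ)) * ∑ i, h i * ‖a i‖^2
      ≤ (1/(n:ℝ)) * (Real.sqrt A * c * Real.sqrt L) := by
        apply mul_le_mul_of_nonneg_left h5 (by positivity)
    _ = c * (Real.sqrt (1/(n:ℝ)) * Real.sqrt A) * (Real.sqrt (1/(n:ℝ)) * Real.sqrt L) := by
        linear_combination (-c * Real.sqrt A * Real.sqrt L) * e3

lemma inf_zero (hn : 0 < n) (a : Fin n → E d) (y : Fin n → ℝ)
    (v : E d) (γ : ℝ) (hγ : 0 < γ) (hsep : ∀ i, γ ≤ y i * ⟪a i, v⟫)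
    (f : E d → ℝ)
    (hf : ∀ x, f x = (1/(n:ℝ)) * ∑ i, Real.log (1 + Real.exp (-(y i * ⟪a i, x⟫)))) :
    (⨅ x, f x) = 0 := by
  have hf0 : ∀ x, 0 ≤ f x := by
    intro x; rw [hf]
    exact mul_nonneg (by positivity) (Finset.sum_nonneg fun i _ =>
      Real.log_nonneg (by linarith [Real.exp_pos (-(y i * ⟪a i, x⟫))]))
  have hbdd : BddBelow (Set.range f) := ⟨0, by rintro z ⟨x, rfl⟩; exact hf0 x⟩
  apply le_antisymm
  · apply le_of_forall_pos_le_add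
    intro ε hε
    set t := max 0 (-Real.log ε / γ) with ht
    have ht0 : 0 ≤ t := le_max_left _ _
    have htγ : -Real.log ε ≤ t * γ := by
      have h1 : -Real.log ε / γ ≤ t := le_max_right _ _
      calc -Real.log ε = (-Real.log ε / γ) * γ := by field_simp
        _ ≤ t * γ := mul_le_mul_of_nonneg_right h1 hγ.le
    have hfb : f (t • v) ≤ ε := by
      rw [hf]
      have hterm : ∀ i : Fin n, Real.log (1 + Real.exp (-(y i * ⟪a i, t • v⟫))) ≤ ε := by
        intro i
        have hi : t * γ ≤ y i * ⟪a i, t • v⟫ := by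
          rw [real_inner_smul_right]
          calc t * γ ≤ t * (y i * ⟪a i, v⟫) := mul_le_mul_of_nonneg_left (hsep i) ht0
            _ = y i * (t * ⟪a i, v⟫) := by ring
        have h1 : Real.exp (-(y i * ⟪a i, t • v⟫)) ≤ ε := by
          have h2 : Real.exp (-(y i * ⟪a i, t • v⟫)) ≤ Real.exp (Real.log ε) :=
            Real.exp_le_exp.2 (by linarith)
          rwa [Real.exp_log hε] at h2
        have h3 : Real.log (1 + Real.exp (-(y i * ⟪a i, t • v⟫)))
            ≤ Real.exp (-(y i * ⟪a i, t • v⟫)) := by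
          have := Real.log_le_sub_one_of_pos
            (x := 1 + Real.exp (-(y i * ⟪a i, t • v⟫))) (by positivity)
          linarith
        linarith
      calc (1/(n:ℝ)) * ∑ i, Real.log (1 + Real.exp (-(y i * ⟪a i, t • v⟫)))
          ≤ (1/(n:ℝ)) * ∑ _i : Fin n, ε := by
            apply mul_le_mul_of_nonneg_left (Finset.sum_le_sum fun i _ => hterm i) (by positivity)
        _ = ε := by
            rw [Finset.sum_const, Finset.card_univ, Fintype.card_fin, nsmul_eq_mul]
            field_simp
    calc (⨅ x, f x) ≤ f (t • v) := ciInf_le hbdd _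
      _ ≤ ε := hfb
      _ = 0 + ε := by ring
  · exact le_ciInf hf0

end

/-- for the empirical logistic loss under linear separability,
`inf f = 0` and the directional curvature is bounded by
`(2/(3√3))·((1/n)Σ‖aᵢ‖⁴)^{1/2}·√(f(x))` wherever `∇f(x) ≠ 0`. -/
theorem empirical_logistic_directional_smoothness {d n : ℕ} (hn : 0 < n)
    (a : Fin n → EuclideanSpace ℝ (Fin d)) (y : Fin n → ℝ)
    (hy : ∀ i, y i = 1 ∨ y i = -1)
    (v : EuclideanSpace ℝ (Fin d)) (γ : ℝ) (hγ : 0 < γ)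
    (hsep : ∀ i, γ ≤ y i * ⟪a i, v⟫)
    (f : EuclideanSpace ℝ (Fin d) → ℝ)
    (hf : ∀ x, f x = (1/(n:ℝ)) * ∑ i, Real.log (1 + Real.exp (-(y i * ⟪a i, x⟫)))) :
    (⨅ x, f x) = 0 ∧
    (∀ x : EuclideanSpace ℝ (Fin d), gradient f x ≠ 0 →
      ⟪gradient f x, fderiv ℝ (gradient f) x (gradient f x)⟫ / ‖gradient f x‖^2
        ≤ (2 / (3 * Real.sqrt 3)) * ((1/(n:ℝ)) * ∑ i, ‖a i‖^4) ^ ((1:ℝ)/2)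
            * Real.sqrt (f x)) := by
  refine ⟨inf_zero hn a y v γ hγ hsep f hf, ?_⟩
  intro x hgx
  set c : ℝ := 2 / (3 * Real.sqrt 3) with hc
  have hc0 : 0 ≤ c := by positivity
  -- gradient formula
  have hgrad : gradient f = fun x => ∑ i,
      ((1/(n:ℝ)) * (-(y i) * (Real.exp (-(y i * ⟪a i, x⟫)) / (1 + Real.exp (-(y i * ⟪a i, x⟫)))))) • a i :=
    gradient_eq (fun x => hasGradientAt_f a y f hf x)
  set g := gradient f x with hg
  have hfd : fderiv ℝ (gradient f) x
      = ∑ i, ((1/(n:ℝ)) * (y i * y i *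
          (Real.exp (-(y i * ⟪a i, x⟫)) / (1 + Real.exp (-(y i * ⟪a i, x⟫)))^2))) •
        ((innerSL ℝ (a i)).smulRight (a i)) := by
    rw [hgrad]; exact (hasFDerivAt_G a y x).fderiv
  set h : Fin n → ℝ := fun i =>
    Real.exp (-(y i * ⟪a i, x⟫)) / (1 + Real.exp (-(y i * ⟪a i, x⟫)))^2 with hhdef
  have hyy : ∀ i, y i * y i = 1 := by intro i; rcases hy i with h1 | h1 <;> rw [h1] <;> norm_num
  have hnum : ⟪g, fderiv ℝ (gradient f) x g⟫ = ∑ i, (1/(n:ℝ)) * (h i * ⟪a i, g⟫^2) := by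
    rw [hfd]
    rw [ContinuousLinearMap.sum_apply, inner_sum]
    refine Finset.sum_congr rfl fun i _ => ?_
    rw [ContinuousLinearMap.smul_apply, ContinuousLinearMap.smulRight_apply,
      real_inner_smul_right, real_inner_smul_right, real_inner_comm (a i) g]
    rw [hyy i]
    simp only [innerSL_apply_apply]
    rw [real_inner_comm g (a i)]
    ring
  have hh0 : ∀ i, 0 ≤ h i := fun i => by positivity
  have hgn : (0:ℝ) < ‖g‖^2 := pow_pos (norm_pos_iff.mpr hgx) 2
  rw [div_le_iff₀ hgn]
  have hstep1 : ⟪g, fderiv ℝ (gradient f) x g⟫ ≤ ((1/(n:ℝ)) * ∑ i, h i * ‖a i‖^2) * ‖g‖^2 := by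
    rw [hnum, Finset.mul_sum, Finset.sum_mul]
    refine Finset.sum_le_sum fun i _ => ?_
    have habs := abs_real_inner_le_norm (a i) g
    have h2 : ⟪a i, g⟫^2 ≤ ‖a i‖^2 * ‖g‖^2 := by
      nlinarith [abs_nonneg ⟪a i, g⟫, sq_abs ⟪a i, g⟫]
    have := mul_le_mul_of_nonneg_left h2 (hh0 i)
    calc (1/(n:ℝ)) * (h i * ⟪a i, g⟫^2) ≤ (1/(n:ℝ)) * (h i * (‖a i‖^2 * ‖g‖^2)) := by
          apply mul_le_mul_of_nonneg_left this (by positivity)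
      _ = (1/(n:ℝ)) * (h i * ‖a i‖^2) * ‖g‖^2 := by ring
  have hstep2 : (1/(n:ℝ)) * ∑ i, h i * ‖a i‖^2
      ≤ c * ((1/(n:ℝ)) * ∑ i, ‖a i‖^4) ^ ((1:ℝ)/2) * Real.sqrt (f x) := by
    rw [hf x]
    exact chain_ineq a h (fun i => Real.log (1 + Real.exp (-(y i * ⟪a i, x⟫)))) c hc0 hh0
      (fun i => Real.log_nonneg (by linarith [Real.exp_pos (-(y i * ⟪a i, x⟫))]))
      (fun i => key_ineq (-(y i * ⟪a i, x⟫)))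
  calc ⟪g, fderiv ℝ (gradient f) x g⟫ ≤ ((1/(n:ℝ)) * ∑ i, h i * ‖a i‖^2) * ‖g‖^2 := hstep1
    _ ≤ (c * ((1/(n:ℝ)) * ∑ i, ‖a i‖^4) ^ ((1:ℝ)/2) * Real.sqrt (f x)) * ‖g‖^2 :=
        mul_le_mul_of_nonneg_right hstep2 hgn.le
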